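/- Elliptical potential lemma: for any λ > 0 and any sequence x_1, …, x_T ∈ ℝ^d with ‖x_t‖₂ ≤ L for all t ∈ [T], defining Z_t = λI + ∑_{i=1}^t x_i x_iᵀ, it holds that ∑_{t=1}^T min{1, ‖x_t‖²_{Z_{t-1}^{-1}}} ≤ 2d·log((dλ + TL²)/(dλ)). -/

import Mathlib

open Matrix Finset

/-- The regularized Gram matrix `Z_t = λ I + ∑_{i=1}^t x_i x_iᵀ`. -/
noncomputable def gramZ {d : ℕ} (lam : ℝ) (x : ℕ → Fin d → ℝ) (t : ℕ) :
    Matrix (Fin d) (Fin d) ℝ :=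
  lam • (1 : Matrix (Fin d) (Fin d) ℝ) + ∑ i ∈ Finset.Icc 1 t, vecMulVec (x i) (x i)

lemma aux_min_le_two_log {u : ℝ} (hu : 0 ≤ u) : min 1 u ≤ 2 * Real.log (1 + u) := by
  rcases le_or_gt u 1 with h | h
  · rw [min_eq_right h]
    have h1 : (0:ℝ) < 1 + u := by linarith
    have h2 : Real.exp (u/2) * (1 - u/2) ≤ 1 := by
      have h0 := Real.add_one_le_exp (-(u/2))
      have h0' := mul_le_mul_of_nonneg_left h0 (Real.exp_pos (u/2)).le
      rw [← Real.exp_add] at h0'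
      simp at h0'
      nlinarith [Real.exp_pos (u/2)]
    have h3 : Real.exp (u/2) ≤ 1 + u := by
      nlinarith [Real.exp_pos (u/2)]
    have := (Real.le_log_iff_exp_le h1).2 h3
    linarith
  · rw [min_eq_left h.le]
    have h2 : Real.log 2 ≤ Real.log (1 + u) := Real.log_le_log (by norm_num) (by linarith)
    have := Real.log_two_gt_d9
    linarith

lemma aux_vecMulVec_posSemidef {d : ℕ} (v : Fin d → ℝ) : (vecMulVec v v).PosSemidef := by
  have : vecMulVec v v = replicateCol (Fin 1) v * (replicateCol (Fin 1) v)ᴴ := by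
    rw [conjTranspose_replicateCol, star_trivial]
    exact vecMulVec_eq (Fin 1) v v
  rw [this]
  exact posSemidef_self_mul_conjTranspose _

lemma gramZ_posDef {d : ℕ} {lam : ℝ} (hlam : 0 < lam) (x : ℕ → Fin d → ℝ) (t : ℕ) :
    (gramZ lam x t).PosDef := by
  apply Matrix.PosDef.add_posSemidef
  · rw [smul_one_eq_diagonal]
    exact Matrix.PosDef.diagonal fun _ => hlam
  · exact Finset.sum_induction _ Matrix.PosSemidef (fun a b ha hb => ha.add hb)
      Matrix.PosSemidef.zero (fun i _ => aux_vecMulVec_posSemidef (x i))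

lemma gramZ_succ {d : ℕ} (lam : ℝ) (x : ℕ → Fin d → ℝ) (t : ℕ) :
    gramZ lam x (t+1) = gramZ lam x t
      + replicateCol (Fin 1) (x (t+1)) * replicateRow (Fin 1) (x (t+1)) := by
  rw [show replicateCol (Fin 1) (x (t+1)) * replicateRow (Fin 1) (x (t+1)) = vecMulVec (x (t+1)) (x (t+1)) from
    (vecMulVec_eq (Fin 1) _ _).symm]
  unfold gramZ
  rw [Finset.sum_Icc_succ_top (Nat.le_add_left 1 t), ← add_assoc]

lemma det_gramZ_succ {d : ℕ} {lam : ℝ} (hlam : 0 < lam) (x : ℕ → Fin d → ℝ) (t : ℕ) :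
    (gramZ lam x (t+1)).det =
      (gramZ lam x t).det * (1 + x (t+1) ⬝ᵥ ((gramZ lam x t)⁻¹ *ᵥ x (t+1))) := by
  have hpd := gramZ_posDef hlam x t
  have hU : IsUnit (gramZ lam x t).det := isUnit_iff_ne_zero.2 hpd.det_pos.ne'
  have hZinv : gramZ lam x t * (gramZ lam x t)⁻¹ = 1 := mul_nonsing_inv _ hU
  have hrw : gramZ lam x (t+1) = gramZ lam x t *
      (1 + (gramZ lam x t)⁻¹ * (replicateCol (Fin 1) (x (t+1)) * replicateRow (Fin 1) (x (t+1)))) := by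
    rw [Matrix.mul_add, Matrix.mul_one, ← Matrix.mul_assoc, hZinv, Matrix.one_mul, gramZ_succ]
  rw [hrw, det_mul]
  congr 1
  rw [← Matrix.mul_assoc, ← replicateCol_mulVec]
  exact det_one_add_replicateCol_mul_replicateRow _ _

lemma trace_gramZ {d : ℕ} (lam : ℝ) (x : ℕ → Fin d → ℝ) (t : ℕ) :
    (gramZ lam x t).trace = d * lam + ∑ i ∈ Finset.Icc 1 t, (x i ⬝ᵥ x i) := by
  unfold gramZ
  rw [trace_add, trace_sum, trace_smul, trace_one]
  have h1 : ∀ i ∈ Finset.Icc 1 t, (vecMulVec (x i) (x i)).trace = x i ⬝ᵥ x i :=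
    fun i _ => by simp [Matrix.trace, Matrix.diag, vecMulVec_apply, dotProduct]
  rw [Finset.sum_congr rfl h1]
  congr 1
  simp [mul_comm]

lemma aux_trace_eq_sum_eigenvalues {d : ℕ} {M : Matrix (Fin d) (Fin d) ℝ}
    (hM : M.IsHermitian) : M.trace = ∑ i, hM.eigenvalues i := by
  simpa using hM.trace_eq_sum_eigenvalues

lemma aux_det_le_pow {d : ℕ} (hd : 0 < d) {M : Matrix (Fin d) (Fin d) ℝ}
    (hM : M.PosSemidef) : M.det ≤ (M.trace / d) ^ d := by
  have hH := hM.1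
  have hev := fun i => hM.eigenvalues_nonneg i
  have hdet : M.det = ∏ i, hH.eigenvalues i := by
    simpa using hH.det_eq_prod_eigenvalues
  have htr : M.trace = ∑ i, hH.eigenvalues i := aux_trace_eq_sum_eigenvalues hH
  have hgm := Real.geom_mean_le_arith_mean_weighted Finset.univ (fun _ => (d:ℝ)⁻¹)
    hH.eigenvalues (fun _ _ => by positivity)
    (by simp [Finset.card_univ, mul_inv_cancel₀ (Nat.cast_ne_zero.2 hd.ne' : (d:ℝ) ≠ 0)])
    (fun i _ => hev i)
  have hA : ∑ i : Fin d, (d:ℝ)⁻¹ * hH.eigenvalues i = M.trace / d := by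
    rw [← Finset.mul_sum, htr]; ring
  rw [hA] at hgm
  have hprod : (∏ i, hH.eigenvalues i ^ ((d:ℝ)⁻¹)) ^ d = M.det := by
    rw [Real.finset_prod_rpow _ _ (fun i _ => hev i), ← Real.rpow_natCast _ d,
      ← Real.rpow_mul (Finset.prod_nonneg fun i _ => hev i),
      inv_mul_cancel₀ (Nat.cast_ne_zero.2 hd.ne' : (d:ℝ) ≠ 0), Real.rpow_one, hdet]
  rw [← hprod]
  exact pow_le_pow_left₀ (Finset.prod_nonneg fun i _ => Real.rpow_nonneg (hev i) _) hgm d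

lemma aux_u_nonneg {d : ℕ} {lam : ℝ} (hlam : 0 < lam) (x : ℕ → Fin d → ℝ) (s t : ℕ) :
    0 ≤ x t ⬝ᵥ ((gramZ lam x s)⁻¹ *ᵥ x t) := by
  have := ((gramZ_posDef hlam x s).inv.posSemidef).dotProduct_mulVec_nonneg (x t)
  simpa using this

lemma aux_log_det {d : ℕ} {lam : ℝ} (hlam : 0 < lam) (x : ℕ → Fin d → ℝ) (T : ℕ) :
    ∑ t ∈ Finset.Icc 1 T, Real.log (1 + x t ⬝ᵥ ((gramZ lam x (t-1))⁻¹ *ᵥ x t))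
      = Real.log (gramZ lam x T).det - Real.log (gramZ lam x 0).det := by
  induction T with
  | zero => simp
  | succ n ih =>
    rw [Finset.sum_Icc_succ_top (Nat.le_add_left 1 n), ih]
    have hu := aux_u_nonneg hlam x n (n+1)
    have h1 : (0:ℝ) < 1 + x (n+1) ⬝ᵥ ((gramZ lam x n)⁻¹ *ᵥ x (n+1)) := by linarith
    simp only [Nat.add_sub_cancel]
    rw [det_gramZ_succ hlam, Real.log_mul (gramZ_posDef hlam x n).det_pos.ne' h1.ne']
    ring

/-- Elliptical potential lemma. -/
theorem statement15 {d : ℕ} (lam : ℝ) (hlam : 0 < lam) (T : ℕ) (L : ℝ)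
    (x : ℕ → Fin d → ℝ) (hx : ∀ t ∈ Finset.Icc 1 T, Real.sqrt (x t ⬝ᵥ x t) ≤ L) :
    ∑ t ∈ Finset.Icc 1 T, min 1 (x t ⬝ᵥ ((gramZ lam x (t - 1))⁻¹ *ᵥ x t)) ≤
      2 * (d : ℝ) * Real.log (((d : ℝ) * lam + (T : ℝ) * L ^ 2) / ((d : ℝ) * lam)) := by
  rcases Nat.eq_zero_or_pos d with hd | hd
  · subst hd
    have h0 : ∀ t ∈ Finset.Icc 1 T, min 1 (x t ⬝ᵥ ((gramZ lam x (t-1))⁻¹ *ᵥ x t)) = (0:ℝ) := by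
      intro t _
      simp [dotProduct]
    rw [Finset.sum_congr rfl h0]
    simp
  · have hd' : (0:ℝ) < d := Nat.cast_pos.2 hd
    set c : ℝ := (d:ℝ) * lam + (T:ℝ) * L^2 with hc
    have hc0 : (0:ℝ) < c := by positivity
    have hpdT := gramZ_posDef hlam x T
    -- step 1 : bound each term
    have step1 : ∑ t ∈ Finset.Icc 1 T, min 1 (x t ⬝ᵥ ((gramZ lam x (t-1))⁻¹ *ᵥ x t))
        ≤ ∑ t ∈ Finset.Icc 1 T, 2 * Real.log (1 + x t ⬝ᵥ ((gramZ lam x (t-1))⁻¹ *ᵥ x t)) :=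
      Finset.sum_le_sum fun t _ => aux_min_le_two_log (aux_u_nonneg hlam x (t-1) t)
    rw [← Finset.mul_sum, aux_log_det hlam x T] at step1
    -- det of Z_0
    have hZ0 : (gramZ lam x 0).det = lam ^ d := by
      unfold gramZ
      simp [det_smul]
    have hlog0 : Real.log (gramZ lam x 0).det = d * Real.log lam := by
      rw [hZ0, Real.log_pow]
    -- trace bound
    have hdots : ∀ i ∈ Finset.Icc 1 T, x i ⬝ᵥ x i ≤ L^2 := by
      intro i hi
      have h0 : (0:ℝ) ≤ x i ⬝ᵥ x i := Finset.sum_nonneg fun j _ => mul_self_nonneg _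
      have h1 := hx i hi
      nlinarith [Real.sq_sqrt h0, Real.sqrt_nonneg (x i ⬝ᵥ x i)]
    have htr : (gramZ lam x T).trace ≤ c := by
      rw [trace_gramZ]
      have : ∑ i ∈ Finset.Icc 1 T, x i ⬝ᵥ x i ≤ (T:ℝ) * L^2 := by
        calc ∑ i ∈ Finset.Icc 1 T, x i ⬝ᵥ x i ≤ ∑ _i ∈ Finset.Icc 1 T, L^2 :=
              Finset.sum_le_sum hdots
          _ = (T:ℝ) * L^2 := by simp [Nat.card_Icc]
      linarith
    have htr0 : (0:ℝ) ≤ (gramZ lam x T).trace := by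
      rw [trace_gramZ]
      have : (0:ℝ) ≤ ∑ i ∈ Finset.Icc 1 T, x i ⬝ᵥ x i :=
        Finset.sum_nonneg fun i _ => Finset.sum_nonneg fun j _ => mul_self_nonneg _
      positivity
    have hdetle : (gramZ lam x T).det ≤ (c/(d:ℝ))^d := by
      refine (aux_det_le_pow hd hpdT.posSemidef).trans ?_
      exact pow_le_pow_left₀ (by positivity) ((div_le_div_iff_of_pos_right hd').2 htr) d
    have hlogle : Real.log (gramZ lam x T).det ≤ (d:ℝ) * Real.log (c/(d:ℝ)) := by
      have := Real.log_le_log hpdT.det_pos hdetle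
      rwa [Real.log_pow] at this
    have hrhs : Real.log (c / ((d:ℝ)*lam)) = Real.log (c/(d:ℝ)) - Real.log lam := by
      rw [Real.log_div hc0.ne' (by positivity), Real.log_div hc0.ne' hd'.ne',
        Real.log_mul hd'.ne' hlam.ne']
      ring
    calc ∑ t ∈ Finset.Icc 1 T, min 1 (x t ⬝ᵥ ((gramZ lam x (t-1))⁻¹ *ᵥ x t))
        ≤ 2 * (Real.log (gramZ lam x T).det - Real.log (gramZ lam x 0).det) := step1
      _ ≤ 2 * ((d:ℝ) * Real.log (c/(d:ℝ)) - (d:ℝ) * Real.log lam) := by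
          rw [hlog0] at step1 ⊢
          linarith
      _ = 2 * (d:ℝ) * Real.log (c / ((d:ℝ)*lam)) := by rw [hrhs]; ring
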